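/- arXiv:1002.4983 — 2 statements merged into one kernel-verified Lean document; each statement's English description precedes it below -/
import Mathlib

section
/- Every admissible marked diagram D of size (2n+1, 2n) admits at least one admissible slicing, i.e., the set 𝒜(D) of admissible slicings of D is nonempty. -/
/-- A marked line is a pair `(ℓ, ε)`; a marked diagram is a finite multiset of marked lines.
`IndecompD D` says that `D` is one of the five indecomposable diagrams. -/
def IndecompD (D : Multiset (ℕ × Bool)) : Prop :=
  (∃ p : ℕ, D = {(4 * p + 1, false)}) ∨
  (∃ p : ℕ, 1 ≤ p ∧ D = {(4 * p - 1, true)}) ∨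
  (∃ p : ℕ, 1 ≤ p ∧ D = {(4 * p - 1, false), (4 * p - 1, false)}) ∨
  (∃ p : ℕ, D = {(4 * p + 1, true), (4 * p + 1, true)}) ∨
  (∃ p : ℕ, 1 ≤ p ∧ D = {(2 * p, false), (2 * p, true)})

/-- A marked diagram is admissible if it is a multiset sum of indecomposable diagrams. -/
def AdmissibleD (D : Multiset (ℕ × Bool)) : Prop :=
  ∃ L : Multiset (Multiset (ℕ × Bool)), (∀ d ∈ L, IndecompD d) ∧ L.sum = D

/-- The number of boxes of `D` labelled `b` (a line `(ℓ, ε)` has `⌈ℓ/2⌉` boxes labelled `ε`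
and `⌊ℓ/2⌋` boxes labelled `1 − ε`). -/
def sizeD (b : Bool) (D : Multiset (ℕ × Bool)) : ℕ :=
  (D.map (fun l => if l.2 = b then (l.1 + 1) / 2 else l.1 / 2)).sum

/-- `D` has parity `ε` if its size is `(2m + (−1)^ε, 2m)` for some `m`
(here `false` plays the role of `ε = 0` and `true` of `ε = 1`). -/
def HasParityD (ε : Bool) (D : Multiset (ℕ × Bool)) : Prop :=
  ∃ m : ℕ, sizeD true D = 2 * m ∧
    (if ε then sizeD false D + 1 = 2 * m else sizeD false D = 2 * m + 1)

/-- The two replacement moves applied to lines of length `k`: either replace one line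
`(k, ε')` with `k ≥ 2` by `(k − 2, !ε')` (the line disappears if `k = 2`), or replace two
lines `(k, ε')`, `(k, ε'')` by `(k − 1, !ε')` and `(k − 1, ε'')` (discarded if `k = 1`). -/
def MoveAtD (k : ℕ) (D D' : Multiset (ℕ × Bool)) : Prop :=
  (∃ ε' : Bool, 2 ≤ k ∧ (k, ε') ∈ D ∧
    D' = D.erase (k, ε') + (if k = 2 then 0 else {(k - 2, !ε')})) ∨
  (∃ ε' ε'' : Bool, (k, ε') ∈ D ∧ (k, ε'') ∈ D.erase (k, ε') ∧
    D' = (D.erase (k, ε')).erase (k, ε'') +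
      (if k = 1 then 0 else {(k - 1, !ε'), (k - 1, ε'')}))

/-- `D'` is an admissible subdiagram of `D` with the removed boxes lying on lines of
length `k`. -/
def SubdiagAtD (k : ℕ) (D D' : Multiset (ℕ × Bool)) : Prop :=
  AdmissibleD D' ∧
  sizeD false D' + sizeD true D' + 2 = sizeD false D + sizeD true D ∧
  (∃ ε : Bool, HasParityD ε D ∧ HasParityD (!ε) D') ∧
  MoveAtD k D D'

/-- `D'` is an admissible subdiagram of `D`. -/
def SubdiagD (D D' : Multiset (ℕ × Bool)) : Prop := ∃ k : ℕ, SubdiagAtD k D D'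

/-- The set of admissible slicings of a diagram `D` of size `(2n+1, 2n)`: sequences
`D = D₀ ⊃ D₁ ⊃ … ⊃ D_{2n}` where each `Dᵢ` is an admissible subdiagram of `D_{i−1}`. -/
def SlicingsD (n : ℕ) (D : Multiset (ℕ × Bool)) :
    Set (Fin (2 * n + 1) → Multiset (ℕ × Bool)) :=
  {s | s 0 = D ∧ ∀ i : Fin (2 * n), SubdiagD (s i.castSucc) (s i.succ)}

namespace SlicingAux

abbrev M := Multiset (ℕ × Bool)

lemma sizeD_add (b : Bool) (X Y : M) : sizeD b (X + Y) = sizeD b X + sizeD b Y := by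
  simp [sizeD]

lemma sizeD_cons (b : Bool) (l : ℕ × Bool) (X : M) :
    sizeD b (l ::ₘ X) = (if l.2 = b then (l.1 + 1) / 2 else l.1 / 2) + sizeD b X := by
  simp [sizeD]

lemma admissible_zero : AdmissibleD 0 := ⟨0, by simp, by simp⟩

lemma admissible_add {X Y : M} (hX : AdmissibleD X) (hY : AdmissibleD Y) :
    AdmissibleD (X + Y) := by
  obtain ⟨L1, h1, e1⟩ := hX
  obtain ⟨L2, h2, e2⟩ := hY
  refine ⟨L1 + L2, ?_, by simp [e1, e2]⟩
  intro d hd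
  rcases Multiset.mem_add.1 hd with h | h
  exacts [h1 d h, h2 d h]

lemma admissible_of_indecomp {d : M} (h : IndecompD d) : AdmissibleD d :=
  ⟨{d}, by simpa using h, by simp⟩

/-- signed box-count difference -/
def F (d : M) : ℤ := (sizeD false d : ℤ) - (sizeD true d : ℤ)

lemma F_add (X Y : M) : F (X + Y) = F X + F Y := by
  unfold F; rw [sizeD_add, sizeD_add]; push_cast; ring

lemma F_sum (L : Multiset M) : (L.map F).sum = F L.sum := by
  induction L using Multiset.induction with
  | empty => simp [F, sizeD]
  | cons a s ih => simp [F_add, ih]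

lemma sum_nonpos (s : Multiset ℤ) (h : ∀ x ∈ s, x ≤ 0) : s.sum ≤ 0 := by
  induction s using Multiset.induction with
  | empty => simp
  | cons a t ih =>
      rw [Multiset.sum_cons]
      have := h a (Multiset.mem_cons_self a t)
      have := ih fun x hx => h x (Multiset.mem_cons_of_mem hx)
      omega

lemma sum_nonneg' (s : Multiset ℤ) (h : ∀ x ∈ s, 0 ≤ x) : 0 ≤ s.sum := by
  induction s using Multiset.induction with
  | empty => simp
  | cons a t ih =>
      rw [Multiset.sum_cons]
      have := h a (Multiset.mem_cons_self a t)
      have := ih fun x hx => h x (Multiset.mem_cons_of_mem hx)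
      omega

lemma exists_pos {L : Multiset M} (h : 0 < (L.map F).sum) : ∃ d ∈ L, 0 < F d := by
  by_contra hc
  push_neg at hc
  have : (L.map F).sum ≤ 0 := by
    apply sum_nonpos
    intro x hx
    obtain ⟨d, hd, rfl⟩ := Multiset.mem_map.1 hx
    exact hc d hd
  omega

lemma exists_neg {L : Multiset M} (h : (L.map F).sum < 0) : ∃ d ∈ L, F d < 0 := by
  by_contra hc
  push_neg at hc
  have : 0 ≤ (L.map F).sum := by
    apply sum_nonneg'
    intro x hx
    obtain ⟨d, hd, rfl⟩ := Multiset.mem_map.1 hx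
    exact hc d hd
  omega

lemma exists_nonneg {L : Multiset M} (hne : L ≠ 0) (h : (L.map F).sum = 0) :
    ∃ d ∈ L, 0 ≤ F d := by
  by_contra hc
  push_neg at hc
  obtain ⟨a, ha⟩ := Multiset.exists_mem_of_ne_zero hne
  obtain ⟨t, rfl⟩ := Multiset.exists_cons_of_mem ha
  have h1 : F a < 0 := hc a (Multiset.mem_cons_self a t)
  have h2 : (t.map F).sum ≤ 0 := by
    apply sum_nonpos
    intro x hx
    obtain ⟨d, hd, rfl⟩ := Multiset.mem_map.1 hx
    exact le_of_lt (hc d (Multiset.mem_cons_of_mem hd))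
  rw [Multiset.map_cons, Multiset.sum_cons] at h
  omega

lemma extract {L : Multiset M} {d : M} (hd : d ∈ L) : L.sum = d + (L.erase d).sum := by
  conv_lhs => rw [← Multiset.cons_erase hd]
  rw [Multiset.sum_cons]

end SlicingAux
namespace SlicingAux

/-- Wrap a false-parity step (removal of two `false` boxes). -/
lemma wrap_false {D D' : M} {k m : ℕ} (hmove : MoveAtD k D D') (hadm' : AdmissibleD D')
    (h0 : sizeD false D' + 2 = sizeD false D) (h1 : sizeD true D' = sizeD true D)
    (hs0 : sizeD false D = 2 * m + 3) (hs1 : sizeD true D = 2 * m + 2) :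
    SubdiagD D D' ∧ AdmissibleD D' ∧ sizeD false D' = 2 * m + 1 ∧
      sizeD true D' = 2 * m + 2 := by
  refine ⟨⟨k, hadm', by omega, ⟨false, ⟨m + 1, by omega, ?_⟩, ⟨m + 1, by omega, ?_⟩⟩, hmove⟩,
    hadm', by omega, by omega⟩
  · simp only [Bool.false_eq_true, if_false]; omega
  · simp only [Bool.not_false, if_true]; omega

/-- Wrap a true-parity step (removal of two `true` boxes). -/
lemma wrap_true {D D' : M} {k m : ℕ} (hmove : MoveAtD k D D') (hadm' : AdmissibleD D')
    (h0 : sizeD false D' = sizeD false D) (h1 : sizeD true D' + 2 = sizeD true D)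
    (hs0 : sizeD false D = 2 * m + 1) (hs1 : sizeD true D = 2 * m + 2) :
    SubdiagD D D' ∧ AdmissibleD D' ∧ sizeD false D' = 2 * m + 1 ∧
      sizeD true D' = 2 * m := by
  refine ⟨⟨k, hadm', by omega, ⟨true, ⟨m + 1, by omega, ?_⟩, ⟨m, by omega, ?_⟩⟩, hmove⟩,
    hadm', by omega, by omega⟩
  · simp only [if_true]; omega
  · simp only [Bool.not_true, Bool.false_eq_true, if_false]; omega

/-- Move on a single line `(4p+1, false)`, `p ≥ 1`: result `(4p-1, true)`. -/
lemma caseA {D R : M} (hD : D = {(4 * p + 1, false)} + R) (hR : AdmissibleD R)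
    (hp : 1 ≤ p) :
    ∃ D' k, MoveAtD k D D' ∧ AdmissibleD D' ∧
      sizeD false D' + 2 = sizeD false D ∧ sizeD true D' = sizeD true D := by
  subst hD
  rw [Multiset.singleton_add]
  refine ⟨R + {(4 * p - 1, true)}, 4 * p + 1, ?_, ?_, ?_, ?_⟩
  · left
    refine ⟨false, by omega, Multiset.mem_cons_self _ _, ?_⟩
    rw [Multiset.erase_cons_head, if_neg (by omega), Bool.not_false,
      show 4 * p + 1 - 2 = 4 * p - 1 from by omega]
  · refine admissible_add hR (admissible_of_indecomp ?_)
    right; left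
    exact ⟨p, hp, rfl⟩
  · simp [sizeD]; omega
  · simp [sizeD]; omega

end SlicingAux
namespace SlicingAux

lemma pair_add (a b : ℕ × Bool) (R : M) : ({a, b} : M) + R = a ::ₘ b ::ₘ R := by
  rw [Multiset.insert_eq_cons, Multiset.cons_add, Multiset.singleton_add]

/-- Pair move on two lines `(1, false)` (two A(0) components): both disappear. -/
lemma caseAA {D R : M} (hD : D = {(1, false)} + ({(1, false)} + R)) (hR : AdmissibleD R) :
    ∃ D' k, MoveAtD k D D' ∧ AdmissibleD D' ∧
      sizeD false D' + 2 = sizeD false D ∧ sizeD true D' = sizeD true D := by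
  subst hD
  rw [Multiset.singleton_add, Multiset.singleton_add]
  refine ⟨R, 1, Or.inr ⟨false, false, Multiset.mem_cons_self _ _, ?_, ?_⟩, hR, ?_, ?_⟩
  · rw [Multiset.erase_cons_head]; exact Multiset.mem_cons_self _ _
  · rw [Multiset.erase_cons_head, Multiset.erase_cons_head, if_pos rfl, add_zero]
  · simp [sizeD]; omega
  · simp [sizeD]

/-- Pair move on component `{(4p-1,false),(4p-1,false)}`, `p ≥ 1`: result `E(2p-1)`. -/
lemma caseC {D R : M} (hD : D = {(4 * p - 1, false), (4 * p - 1, false)} + R)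
    (hR : AdmissibleD R) (hp : 1 ≤ p) :
    ∃ D' k, MoveAtD k D D' ∧ AdmissibleD D' ∧
      sizeD false D' + 2 = sizeD false D ∧ sizeD true D' = sizeD true D := by
  subst hD
  rw [pair_add]
  refine ⟨R + {(4 * p - 2, true), (4 * p - 2, false)}, 4 * p - 1,
    Or.inr ⟨false, false, Multiset.mem_cons_self _ _, ?_, ?_⟩, ?_, ?_, ?_⟩
  · rw [Multiset.erase_cons_head]; exact Multiset.mem_cons_self _ _
  · rw [Multiset.erase_cons_head, Multiset.erase_cons_head, if_neg (by omega),
      Bool.not_false, show 4 * p - 1 - 1 = 4 * p - 2 from by omega]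
  · refine admissible_add hR (admissible_of_indecomp ?_)
    right; right; right; right
    refine ⟨2 * p - 1, by omega, ?_⟩
    rw [show 2 * (2 * p - 1) = 4 * p - 2 from by omega]
    exact Multiset.pair_comm _ _
  · simp [sizeD]; omega
  · simp [sizeD]; omega

/-- Pair move on component `{(2p,false),(2p,true)}`, `p ≥ 1`, removing two false boxes:
result two lines `(2p-1, true)`. -/
lemma caseE {D R : M} (hD : D = {(2 * p, false), (2 * p, true)} + R)
    (hR : AdmissibleD R) (hp : 1 ≤ p) :
    ∃ D' k, MoveAtD k D D' ∧ AdmissibleD D' ∧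
      sizeD false D' + 2 = sizeD false D ∧ sizeD true D' = sizeD true D := by
  subst hD
  rw [pair_add]
  refine ⟨R + {(2 * p - 1, true), (2 * p - 1, true)}, 2 * p,
    Or.inr ⟨false, true, Multiset.mem_cons_self _ _, ?_, ?_⟩, ?_, ?_, ?_⟩
  · rw [Multiset.erase_cons_head]; exact Multiset.mem_cons_self _ _
  · rw [Multiset.erase_cons_head, Multiset.erase_cons_head, if_neg (by omega),
      Bool.not_false]
  · refine admissible_add hR ?_
    rcases Nat.even_or_odd p with ⟨q, hq⟩ | ⟨q, hq⟩
    · have h1 : ({(2 * p - 1, true), (2 * p - 1, true)} : M)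
          = {(4 * q - 1, true)} + {(4 * q - 1, true)} := by
        rw [show 2 * p - 1 = 4 * q - 1 from by omega, Multiset.insert_eq_cons,
          Multiset.singleton_add]
      rw [h1]
      have hB : IndecompD ({(4 * q - 1, true)} : M) := Or.inr (Or.inl ⟨q, by omega, rfl⟩)
      exact admissible_add (admissible_of_indecomp hB) (admissible_of_indecomp hB)
    · apply admissible_of_indecomp
      right; right; right; left
      exact ⟨q, by rw [show 2 * p - 1 = 4 * q + 1 from by omega]⟩
  · simp [sizeD]; omega
  · simp [sizeD]; omega

end SlicingAux
namespace SlicingAux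

/-- Move on a single line `(4p-1, true)`, `p ≥ 1`: result `(4p-3, false) = A(p-1)`. -/
lemma caseB {D R : M} (hD : D = {(4 * p - 1, true)} + R) (hR : AdmissibleD R)
    (hp : 1 ≤ p) :
    ∃ D' k, MoveAtD k D D' ∧ AdmissibleD D' ∧
      sizeD false D' = sizeD false D ∧ sizeD true D' + 2 = sizeD true D := by
  subst hD
  rw [Multiset.singleton_add]
  refine ⟨R + {(4 * p - 3, false)}, 4 * p - 1, ?_, ?_, ?_, ?_⟩
  · left
    refine ⟨true, by omega, Multiset.mem_cons_self _ _, ?_⟩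
    rw [Multiset.erase_cons_head, if_neg (by omega), Bool.not_true,
      show 4 * p - 1 - 2 = 4 * p - 3 from by omega]
  · refine admissible_add hR (admissible_of_indecomp ?_)
    left
    exact ⟨p - 1, by rw [show 4 * (p - 1) + 1 = 4 * p - 3 from by omega]⟩
  · simp [sizeD]; omega
  · simp [sizeD]; omega

/-- Pair move on component `{(1,true),(1,true)}` (D(0)): both lines disappear. -/
lemma caseD0 {D R : M} (hD : D = {(1, true), (1, true)} + R) (hR : AdmissibleD R) :
    ∃ D' k, MoveAtD k D D' ∧ AdmissibleD D' ∧
      sizeD false D' = sizeD false D ∧ sizeD true D' + 2 = sizeD true D := by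
  subst hD
  rw [pair_add]
  refine ⟨R, 1, Or.inr ⟨true, true, Multiset.mem_cons_self _ _, ?_, ?_⟩, hR, ?_, ?_⟩
  · rw [Multiset.erase_cons_head]; exact Multiset.mem_cons_self _ _
  · rw [Multiset.erase_cons_head, Multiset.erase_cons_head, if_pos rfl, add_zero]
  · simp [sizeD]
  · simp [sizeD]; omega

/-- Pair move on component `{(4p+1,true),(4p+1,true)}`, `p ≥ 1`: result `E(2p)`. -/
lemma caseDp {D R : M} (hD : D = {(4 * p + 1, true), (4 * p + 1, true)} + R)
    (hR : AdmissibleD R) (hp : 1 ≤ p) :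
    ∃ D' k, MoveAtD k D D' ∧ AdmissibleD D' ∧
      sizeD false D' = sizeD false D ∧ sizeD true D' + 2 = sizeD true D := by
  subst hD
  rw [pair_add]
  refine ⟨R + {(4 * p, false), (4 * p, true)}, 4 * p + 1,
    Or.inr ⟨true, true, Multiset.mem_cons_self _ _, ?_, ?_⟩, ?_, ?_, ?_⟩
  · rw [Multiset.erase_cons_head]; exact Multiset.mem_cons_self _ _
  · rw [Multiset.erase_cons_head, Multiset.erase_cons_head, if_neg (by omega),
      Bool.not_true, show 4 * p + 1 - 1 = 4 * p from by omega]
  · refine admissible_add hR (admissible_of_indecomp ?_)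
    right; right; right; right
    exact ⟨2 * p, by omega, by rw [show 2 * (2 * p) = 4 * p from by omega]⟩
  · simp [sizeD]; omega
  · simp [sizeD]; omega

end SlicingAux
namespace SlicingAux

lemma stepFalse {D : M} (m : ℕ) (hadm : AdmissibleD D)
    (hs0 : sizeD false D = 2 * m + 3) (hs1 : sizeD true D = 2 * m + 2) :
    ∃ D', SubdiagD D D' ∧ AdmissibleD D' ∧ sizeD false D' = 2 * m + 1 ∧
      sizeD true D' = 2 * m + 2 := by
  obtain ⟨L, hL, rfl⟩ := hadm
  have hFsum : (L.map F).sum = 1 := by rw [F_sum]; unfold F; omega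
  obtain ⟨d, hdL, hdpos⟩ := exists_pos (L := L) (by omega)
  have hrest : AdmissibleD ((L.erase d).sum) :=
    ⟨L.erase d, fun x hx => hL x (Multiset.mem_of_mem_erase hx), rfl⟩
  have hDeq : L.sum = d + (L.erase d).sum := extract hdL
  rcases hL d hdL with ⟨p, hd⟩ | ⟨p, hp, hd⟩ | ⟨p, hp, hd⟩ | ⟨p, hd⟩ | ⟨p, hp, hd⟩
  · -- A(p)
    by_cases hp : 1 ≤ p
    · obtain ⟨D', k, h1, h2, h3, h4⟩ := caseA (D := L.sum) (by rw [hDeq, hd]) hrest hp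
      exact ⟨D', wrap_false h1 h2 h3 h4 hs0 hs1⟩
    · -- p = 0 : the component is a single box (1, false)
      have hp0 : p = 0 := by omega
      subst hp0
      have hd1 : d = {(1, false)} := by rw [hd]
      have hFd : F d = 1 := by rw [hd1]; simp [F, sizeD]
      have hFR : ((L.erase d).map F).sum = 0 := by
        have hsplit : L = d ::ₘ L.erase d := (Multiset.cons_erase hdL).symm
        rw [hsplit, Multiset.map_cons, Multiset.sum_cons, hFd] at hFsum
        omega
      have hne : L.erase d ≠ 0 := by
        intro h0
        rw [h0] at hDeq
        rw [hDeq, hd1] at hs0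
        simp [sizeD] at hs0
      obtain ⟨d', hd'L, hd'nn⟩ := exists_nonneg hne hFR
      have hrest2 : AdmissibleD (((L.erase d).erase d').sum) :=
        ⟨_, fun x hx =>
          hL x (Multiset.mem_of_mem_erase (Multiset.mem_of_mem_erase hx)), rfl⟩
      have hrest2' : AdmissibleD (d + ((L.erase d).erase d').sum) :=
        admissible_add (admissible_of_indecomp (Or.inl ⟨0, hd⟩)) hrest2
      have hDeq2 : L.sum = d' + (d + ((L.erase d).erase d').sum) := by
        rw [hDeq, extract hd'L, add_left_comm]
      rcases hL d' (Multiset.mem_of_mem_erase hd'L) with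
        ⟨q, hd'⟩ | ⟨q, hq, hd'⟩ | ⟨q, hq, hd'⟩ | ⟨q, hd'⟩ | ⟨q, hq, hd'⟩
      · -- d' = A(q)
        by_cases hq1 : 1 ≤ q
        · obtain ⟨D', k, h1, h2, h3, h4⟩ := caseA (D := L.sum) (by rw [hDeq2, hd']) hrest2' hq1
          exact ⟨D', wrap_false h1 h2 h3 h4 hs0 hs1⟩
        · have hq0 : q = 0 := by omega
          subst hq0
          have hd'1 : d' = {(1, false)} := by rw [hd']
          obtain ⟨D', k, h1, h2, h3, h4⟩ :=
            caseAA (D := L.sum) (by rw [hDeq2, hd'1, hd1]) hrest2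
          exact ⟨D', wrap_false h1 h2 h3 h4 hs0 hs1⟩
      · exfalso; rw [hd'] at hd'nn; simp [F, sizeD] at hd'nn; omega
      · obtain ⟨D', k, h1, h2, h3, h4⟩ := caseC (D := L.sum) (by rw [hDeq2, hd']) hrest2' hq
        exact ⟨D', wrap_false h1 h2 h3 h4 hs0 hs1⟩
      · exfalso; rw [hd'] at hd'nn; simp [F, sizeD] at hd'nn; omega
      · obtain ⟨D', k, h1, h2, h3, h4⟩ := caseE (D := L.sum) (by rw [hDeq2, hd']) hrest2' hq
        exact ⟨D', wrap_false h1 h2 h3 h4 hs0 hs1⟩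
  · exfalso; rw [hd] at hdpos; simp [F, sizeD] at hdpos; omega
  · obtain ⟨D', k, h1, h2, h3, h4⟩ := caseC (D := L.sum) (by rw [hDeq, hd]) hrest hp
    exact ⟨D', wrap_false h1 h2 h3 h4 hs0 hs1⟩
  · exfalso; rw [hd] at hdpos; simp [F, sizeD] at hdpos; omega
  · obtain ⟨D', k, h1, h2, h3, h4⟩ := caseE (D := L.sum) (by rw [hDeq, hd]) hrest hp
    exact ⟨D', wrap_false h1 h2 h3 h4 hs0 hs1⟩

lemma stepTrue {D : M} (m : ℕ) (hadm : AdmissibleD D)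
    (hs0 : sizeD false D = 2 * m + 1) (hs1 : sizeD true D = 2 * m + 2) :
    ∃ D', SubdiagD D D' ∧ AdmissibleD D' ∧ sizeD false D' = 2 * m + 1 ∧
      sizeD true D' = 2 * m := by
  obtain ⟨L, hL, rfl⟩ := hadm
  have hFsum : (L.map F).sum = -1 := by rw [F_sum]; unfold F; omega
  obtain ⟨d, hdL, hdneg⟩ := exists_neg (L := L) (by omega)
  have hrest : AdmissibleD ((L.erase d).sum) :=
    ⟨L.erase d, fun x hx => hL x (Multiset.mem_of_mem_erase hx), rfl⟩
  have hDeq : L.sum = d + (L.erase d).sum := extract hdL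
  rcases hL d hdL with ⟨p, hd⟩ | ⟨p, hp, hd⟩ | ⟨p, hp, hd⟩ | ⟨p, hd⟩ | ⟨p, hp, hd⟩
  · exfalso; rw [hd] at hdneg; simp [F, sizeD] at hdneg; omega
  · obtain ⟨D', k, h1, h2, h3, h4⟩ := caseB (D := L.sum) (by rw [hDeq, hd]) hrest hp
    exact ⟨D', wrap_true h1 h2 h3 h4 hs0 hs1⟩
  · exfalso; rw [hd] at hdneg; simp [F, sizeD] at hdneg; omega
  · by_cases hp : 1 ≤ p
    · obtain ⟨D', k, h1, h2, h3, h4⟩ := caseDp (D := L.sum) (by rw [hDeq, hd]) hrest hp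
      exact ⟨D', wrap_true h1 h2 h3 h4 hs0 hs1⟩
    · have hp0 : p = 0 := by omega
      subst hp0
      have hd1 : d = {(1, true), (1, true)} := by rw [hd]
      obtain ⟨D', k, h1, h2, h3, h4⟩ := caseD0 (D := L.sum) (by rw [hDeq, hd1]) hrest
      exact ⟨D', wrap_true h1 h2 h3 h4 hs0 hs1⟩
  · exfalso; rw [hd] at hdneg; simp [F, sizeD] at hdneg; omega

end SlicingAux
namespace SlicingAux

lemma slicing_cons {N : ℕ} (D₀ : M) (t : Fin (N + 1) → M)
    (h0 : SubdiagD D₀ (t 0))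
    (ht : ∀ j : Fin N, SubdiagD (t j.castSucc) (t j.succ)) :
    ∀ i : Fin (N + 1),
      SubdiagD ((Fin.cons D₀ t : Fin (N + 2) → M) i.castSucc)
        ((Fin.cons D₀ t : Fin (N + 2) → M) i.succ) := by
  intro i
  induction i using Fin.cases with
  | zero => simpa using h0
  | succ j =>
      rw [← Fin.succ_castSucc, Fin.cons_succ, Fin.cons_succ]
      exact ht j

end SlicingAux

/-- Every admissible marked diagram of size `(2n+1, 2n)` admits at least one admissible
slicing. -/
theorem slicings_nonempty (n : ℕ) (D : Multiset (ℕ × Bool)) (hadm : AdmissibleD D)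
    (hsize0 : sizeD false D = 2 * n + 1) (hsize1 : sizeD true D = 2 * n) :
    (SlicingsD n D).Nonempty := by
  induction n generalizing D with
  | zero => exact ⟨fun _ => D, rfl, fun i => i.elim0⟩
  | succ n ih =>
      obtain ⟨D₁, hsub1, hadm1, h10, h11⟩ :=
        SlicingAux.stepFalse n hadm (by omega) (by omega)
      obtain ⟨D₂, hsub2, hadm2, h20, h21⟩ := SlicingAux.stepTrue n hadm1 h10 h11
      obtain ⟨s', hs'0, hs'⟩ := ih D₂ hadm2 h20 h21
      refine ⟨Fin.cons D (Fin.cons D₁ s'), rfl, ?_⟩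
      have inner : ∀ j : Fin (2 * n + 1),
          SubdiagD ((Fin.cons D₁ s' : Fin (2 * n + 2) → SlicingAux.M) j.castSucc)
            ((Fin.cons D₁ s' : Fin (2 * n + 2) → SlicingAux.M) j.succ) :=
        SlicingAux.slicing_cons D₁ s' (by rw [hs'0]; exact hsub2) hs'
      exact SlicingAux.slicing_cons D (Fin.cons D₁ s') hsub1 inner
end

section
/- For every integer n ≥ 2, the admissible marked diagram consisting of the three lines (1, 0), (3, 1) and (4n−3, 0) (the diagram of the codimension-2 orbit O₂ in osp(2n+1, 2n); it has size (2n+1, 2n)) has exactly n admissible slicings. -/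
namespace SliceAux
open Multiset

lemma erase2_1 (a b : ℕ×Bool) : ({a,b} : Multiset (ℕ×Bool)).erase a = {b} := by
  simp [Multiset.insert_eq_cons]

lemma erase2_2 (a b : ℕ×Bool) (h : a ≠ b) : ({a,b} : Multiset (ℕ×Bool)).erase b = {a} := by
  rw [Multiset.insert_eq_cons, Multiset.erase_cons_tail _ h]; simp

lemma erase3_1 (a b c : ℕ×Bool) : ({a,b,c} : Multiset (ℕ×Bool)).erase a = {b,c} := by
  simp [Multiset.insert_eq_cons]

lemma erase3_2 (a b c : ℕ×Bool) (h : a ≠ b) :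
    ({a,b,c} : Multiset (ℕ×Bool)).erase b = {a,c} := by
  rw [Multiset.insert_eq_cons, Multiset.erase_cons_tail _ h]
  simp [Multiset.insert_eq_cons]

lemma erase3_3 (a b c : ℕ×Bool) (h1 : a ≠ c) (h2 : b ≠ c) :
    ({a,b,c} : Multiset (ℕ×Bool)).erase c = {a,b} := by
  rw [Multiset.insert_eq_cons, Multiset.erase_cons_tail _ h1,
    Multiset.insert_eq_cons, Multiset.erase_cons_tail _ h2]
  simp

lemma add1 (a : ℕ×Bool) (s : Multiset (ℕ×Bool)) : ({a} : Multiset (ℕ×Bool)) + s = a ::ₘ s :=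
  Multiset.singleton_add a s

lemma sizeD_3 (b : Bool) (x y z : ℕ×Bool) :
    sizeD b {x,y,z} = (if x.2 = b then (x.1+1)/2 else x.1/2)
      + (if y.2 = b then (y.1+1)/2 else y.1/2) + (if z.2 = b then (z.1+1)/2 else z.1/2) := by
  simp [sizeD]; ring

lemma sizeD_2 (b : Bool) (x y : ℕ×Bool) :
    sizeD b {x,y} = (if x.2 = b then (x.1+1)/2 else x.1/2)
      + (if y.2 = b then (y.1+1)/2 else y.1/2) := by
  simp [sizeD]

lemma sizeD_1 (b : Bool) (x : ℕ×Bool) :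
    sizeD b {x} = (if x.2 = b then (x.1+1)/2 else x.1/2) := by
  simp [sizeD]

lemma adm_add {A B : Multiset (ℕ×Bool)} (hA : AdmissibleD A) (hB : AdmissibleD B) :
    AdmissibleD (A + B) := by
  obtain ⟨L1, h1, h1s⟩ := hA; obtain ⟨L2, h2, h2s⟩ := hB
  exact ⟨L1 + L2, by intro d hd; rcases Multiset.mem_add.1 hd with h | h; exacts [h1 d h, h2 d h],
    by rw [Multiset.sum_add, h1s, h2s]⟩

lemma adm_ind {d : Multiset (ℕ×Bool)} (h : IndecompD d) : AdmissibleD d :=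
  ⟨{d}, by simpa using h, by simp⟩

lemma adm_1f : AdmissibleD {(1,false)} := adm_ind (Or.inl ⟨0, by norm_num⟩)

lemma adm_odd3 {l : ℕ} (h : l % 4 = 3) : AdmissibleD {(l,true)} :=
  adm_ind (Or.inr (Or.inl ⟨(l+1)/4, by omega, by rw [show 4*((l+1)/4)-1 = l from by omega]⟩))

lemma adm_odd1 {l : ℕ} (h : l % 4 = 1) : AdmissibleD {(l,false)} :=
  adm_ind (Or.inl ⟨l/4, by rw [show 4*(l/4)+1 = l from by omega]⟩)

lemma adm_pair {p : ℕ} (h : 1 ≤ p) : AdmissibleD {(2*p,false),(2*p,true)} :=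
  adm_ind (Or.inr (Or.inr (Or.inr (Or.inr ⟨p, h, rfl⟩))))

lemma adm_1t1t : AdmissibleD {(1,true),(1,true)} :=
  adm_ind (Or.inr (Or.inr (Or.inr (Or.inl ⟨0, by norm_num⟩))))

lemma adm_cons {a : ℕ×Bool} {B : Multiset (ℕ×Bool)} (hA : AdmissibleD {a})
    (hB : AdmissibleD B) : AdmissibleD (a ::ₘ B) := by
  have := adm_add hA hB; rwa [add1] at this

end SliceAux
namespace SliceAux

lemma sizeD_cons (b : Bool) (a : ℕ×Bool) (s : Multiset (ℕ×Bool)) :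
    sizeD b (a ::ₘ s) = (if a.2 = b then (a.1+1)/2 else a.1/2) + sizeD b s := by
  simp [sizeD]

lemma sizeD_zero (b : Bool) : sizeD b 0 = 0 := by simp [sizeD]

/-- single-line forced step -/
lemma step_single {l : ℕ} {e : Bool} {D' : Multiset (ℕ×Bool)} (h3 : 3 ≤ l)
    (hs : SubdiagD {(l,e)} D') : D' = {(l-2, !e)} := by
  obtain ⟨k, -, -, -, hmove⟩ := hs
  rcases hmove with ⟨e', hk2, hmem, hD'⟩ | ⟨e', e'', hmem, hmem2, hD'⟩
  · simp [Prod.ext_iff] at hmem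
    obtain ⟨rfl, rfl⟩ := hmem
    rw [if_neg (by omega), Multiset.erase_singleton] at hD'
    simpa using hD'
  · exfalso
    simp [Prod.ext_iff] at hmem
    obtain ⟨rfl, rfl⟩ := hmem
    rw [Multiset.erase_singleton] at hmem2
    exact Multiset.notMem_zero _ hmem2

/-- T1 forced step: `{(1,0),(3,1),(l,0)}`, `l % 4 = 1`, `l ≥ 5`. -/
lemma step_T1 {l : ℕ} {D' : Multiset (ℕ×Bool)} (h5 : 5 ≤ l)
    (hs : SubdiagD {(1,false),(3,true),(l,false)} D') :
    D' = {(1,false),(3,true),(l-2,true)} := by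
  obtain ⟨k, -, -, hpar, hmove⟩ := hs
  rcases hmove with ⟨e', hk2, hmem, hD'⟩ | ⟨e', e'', hmem, hmem2, hD'⟩
  · simp [Prod.ext_iff] at hmem
    rcases hmem with ⟨rfl, rfl⟩ | ⟨rfl, rfl⟩ | ⟨rfl, rfl⟩
    · omega
    · -- remove (3,true) : excluded by parity
      exfalso
      rw [if_neg (by omega), erase3_2 _ _ _ (by simp)] at hD'
      obtain ⟨ε, hp, hp'⟩ := hpar
      rw [hD'] at hp'
      revert hp hp'
      cases ε <;>
        simp [HasParityD, sizeD_cons, sizeD_1, sizeD_zero, Multiset.cons_add] <;>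
        omega
    · rw [if_neg (by omega), erase3_3 _ _ _ (by simp; omega) (by simp)] at hD'
      rw [hD']
      simp [Multiset.insert_eq_cons, Multiset.cons_add]
  · exfalso
    simp [Prod.ext_iff] at hmem
    rcases hmem with ⟨rfl, rfl⟩ | ⟨rfl, rfl⟩ | ⟨rfl, rfl⟩
    · rw [erase3_1] at hmem2
      simp [Prod.ext_iff] at hmem2
      omega
    · rw [erase3_2 _ _ _ (by simp)] at hmem2
      simp [Prod.ext_iff] at hmem2
      omega
    · rw [erase3_3 _ _ _ (by simp; omega) (by simp)] at hmem2
      simp [Prod.ext_iff] at hmem2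
      omega

end SliceAux
namespace SliceAux

/-- T2 step: `{(1,0),(3,1),(l,1)}`, `l ≥ 7`: two possibilities. -/
lemma step_T2 {l : ℕ} {D' : Multiset (ℕ×Bool)} (h7 : 7 ≤ l)
    (hs : SubdiagD {(1,false),(3,true),(l,true)} D') :
    D' = {(1,false),(3,true),(l-2,false)} ∨ D' = {(1,false),(1,false),(l,true)} := by
  obtain ⟨k, -, -, hpar, hmove⟩ := hs
  rcases hmove with ⟨e', hk2, hmem, hD'⟩ | ⟨e', e'', hmem, hmem2, hD'⟩
  · simp [Prod.ext_iff] at hmem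
    rcases hmem with ⟨rfl, rfl⟩ | ⟨rfl, rfl⟩ | ⟨rfl, rfl⟩
    · omega
    · right
      rw [if_neg (by omega), erase3_2 _ _ _ (by simp)] at hD'
      rw [hD', add_comm, add1]
      simp [Multiset.insert_eq_cons]
    · left
      rw [if_neg (by omega), erase3_3 _ _ _ (by simp) (by simp; omega)] at hD'
      rw [hD']
      simp [Multiset.insert_eq_cons, Multiset.cons_add]
  · exfalso
    simp [Prod.ext_iff] at hmem
    rcases hmem with ⟨rfl, rfl⟩ | ⟨rfl, rfl⟩ | ⟨rfl, rfl⟩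
    · rw [erase3_1] at hmem2
      simp [Prod.ext_iff] at hmem2
      omega
    · rw [erase3_2 _ _ _ (by simp)] at hmem2
      simp [Prod.ext_iff] at hmem2
      omega
    · rw [erase3_3 _ _ _ (by simp) (by simp; omega)] at hmem2
      simp [Prod.ext_iff] at hmem2
      omega

/-- T2 step at `l = 3`: `{(1,0),(3,1),(3,1)}`: two possibilities. -/
lemma step_T2' {D' : Multiset (ℕ×Bool)}
    (hs : SubdiagD {(1,false),(3,true),(3,true)} D') :
    D' = {(1,false),(1,false),(3,true)} ∨ D' = {(1,false),(2,false),(2,true)} := by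
  obtain ⟨k, -, -, hpar, hmove⟩ := hs
  rcases hmove with ⟨e', hk2, hmem, hD'⟩ | ⟨e', e'', hmem, hmem2, hD'⟩
  · simp [Prod.ext_iff] at hmem
    rcases hmem with ⟨rfl, rfl⟩ | ⟨rfl, rfl⟩
    · omega
    · left
      rw [if_neg (by omega), erase3_2 _ _ _ (by simp)] at hD'
      rw [hD']
      decide
  · simp [Prod.ext_iff] at hmem
    rcases hmem with ⟨rfl, rfl⟩ | ⟨rfl, rfl⟩
    · exfalso
      rw [erase3_1] at hmem2
      simp [Prod.ext_iff] at hmem2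
    · right
      rw [erase3_2 _ _ _ (by simp)] at hmem2
      simp [Prod.ext_iff] at hmem2
      subst hmem2
      rw [erase3_2 _ _ _ (by simp), erase2_2 _ _ (by simp), if_neg (by omega)] at hD'
      rw [hD']
      decide

/-- T3 step: `{(1,0),(1,0),(l,1)}`, `l % 4 = 3`: forced. -/
lemma step_T3 {l : ℕ} {D' : Multiset (ℕ×Bool)} (hl : l % 4 = 3)
    (hs : SubdiagD {(1,false),(1,false),(l,true)} D') : D' = {(l,true)} := by
  obtain ⟨k, -, -, hpar, hmove⟩ := hs
  rcases hmove with ⟨e', hk2, hmem, hD'⟩ | ⟨e', e'', hmem, hmem2, hD'⟩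
  · simp [Prod.ext_iff] at hmem
    rcases hmem with ⟨rfl, rfl⟩ | ⟨rfl, rfl⟩
    · omega
    · -- single move on (l,1): excluded by parity
      exfalso
      rw [if_neg (by omega), erase3_3 _ _ _ (by simp) (by simp)] at hD'
      obtain ⟨ε, hp, hp'⟩ := hpar
      rw [hD'] at hp'
      revert hp hp'
      cases ε <;>
        simp [HasParityD, sizeD_cons, sizeD_1, sizeD_zero, Multiset.cons_add] <;>
        omega
  · simp [Prod.ext_iff] at hmem
    rcases hmem with ⟨rfl, rfl⟩ | ⟨rfl, rfl⟩
    · rw [erase3_1] at hmem2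
      simp [Prod.ext_iff] at hmem2
      obtain ⟨-, rfl⟩ : 1 = 1 ∧ e'' = false := by
        rcases hmem2 with ⟨-, rfl⟩ | ⟨h, -⟩
        · exact ⟨rfl, rfl⟩
        · omega
      rw [erase3_1, erase2_1, if_pos rfl] at hD'
      rw [hD']
      simp
    · exfalso
      rw [erase3_3 _ _ _ (by simp) (by simp)] at hmem2
      simp [Prod.ext_iff] at hmem2
      omega

/-- T6 step: `{(1,0),(2,0),(2,1)}`: forced. -/
lemma step_T6 {D' : Multiset (ℕ×Bool)}
    (hs : SubdiagD {(1,false),(2,false),(2,true)} D') :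
    D' = {(1,false),(1,true),(1,true)} := by
  obtain ⟨k, -, -, hpar, hmove⟩ := hs
  rcases hmove with ⟨e', hk2, hmem, hD'⟩ | ⟨e', e'', hmem, hmem2, hD'⟩
  · simp [Prod.ext_iff] at hmem
    rcases hmem with ⟨rfl, rfl⟩ | ⟨rfl, rfl⟩ | ⟨rfl, rfl⟩
    · omega
    · exfalso
      rw [if_pos rfl, erase3_2 _ _ _ (by simp)] at hD'
      obtain ⟨ε, hp, hp'⟩ := hpar
      rw [hD'] at hp'
      revert hp hp'
      cases ε <;> simp [HasParityD, sizeD_cons, sizeD_1, sizeD_zero] <;> omega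
    · exfalso
      rw [if_pos rfl, erase3_3 _ _ _ (by simp) (by simp)] at hD'
      obtain ⟨ε, hp, hp'⟩ := hpar
      rw [hD'] at hp'
      revert hp hp'
      cases ε <;> simp [HasParityD, sizeD_cons, sizeD_1, sizeD_zero] <;> omega
  · simp [Prod.ext_iff] at hmem
    rcases hmem with ⟨rfl, rfl⟩ | ⟨rfl, rfl⟩ | ⟨rfl, rfl⟩
    · exfalso
      rw [erase3_1] at hmem2
      simp [Prod.ext_iff] at hmem2
    · rw [erase3_2 _ _ _ (by simp)] at hmem2
      simp [Prod.ext_iff] at hmem2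
      subst hmem2
      rw [erase3_2 _ _ _ (by simp), erase2_2 _ _ (by simp), if_neg (by omega)] at hD'
      rw [hD']
      decide
    · exfalso
      rw [erase3_3 _ _ _ (by simp) (by simp)] at hmem2
      simp [Prod.ext_iff] at hmem2
      subst hmem2
      rw [erase3_3 _ _ _ (by simp) (by simp), erase2_2 _ _ (by simp), if_neg (by omega)] at hD'
      obtain ⟨ε, hp, hp'⟩ := hpar
      rw [hD'] at hp'
      revert hp hp'
      cases ε <;> simp [HasParityD, sizeD_cons, sizeD_1, sizeD_zero, Multiset.insert_eq_cons,
        Multiset.cons_add, Multiset.singleton_add] <;> omega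

/-- T7 step: `{(1,0),(1,1),(1,1)}`: forced. -/
lemma step_T7 {D' : Multiset (ℕ×Bool)}
    (hs : SubdiagD {(1,false),(1,true),(1,true)} D') : D' = {(1,false)} := by
  obtain ⟨k, -, -, hpar, hmove⟩ := hs
  rcases hmove with ⟨e', hk2, hmem, hD'⟩ | ⟨e', e'', hmem, hmem2, hD'⟩
  · exfalso
    simp [Prod.ext_iff] at hmem
    rcases hmem with ⟨rfl, rfl⟩ | ⟨rfl, rfl⟩ <;> omega
  · simp [Prod.ext_iff] at hmem
    rcases hmem with ⟨rfl, rfl⟩ | ⟨rfl, rfl⟩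
    · exfalso
      rw [erase3_1] at hmem2
      simp [Prod.ext_iff] at hmem2
      subst hmem2
      rw [erase3_1, erase2_1, if_pos rfl] at hD'
      obtain ⟨ε, hp, hp'⟩ := hpar
      rw [hD'] at hp'
      revert hp hp'
      cases ε <;> simp [HasParityD, sizeD_cons, sizeD_1, sizeD_zero] <;> omega
    · cases e''
      · exfalso
        rw [erase3_2 _ _ _ (by simp), erase2_1, if_pos rfl] at hD'
        obtain ⟨ε, hp, hp'⟩ := hpar
        rw [hD'] at hp'
        revert hp hp'
        cases ε <;> simp [HasParityD, sizeD_cons, sizeD_1, sizeD_zero] <;> omega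
      · rw [erase3_2 _ _ _ (by simp), erase2_2 _ _ (by simp), if_pos rfl] at hD'
        rw [hD']
        decide

end SliceAux
namespace SliceAux

lemma adm_2f2t : AdmissibleD {(2,false),(2,true)} := by
  have h := adm_pair (p := 1) le_rfl
  norm_num at h ⊢
  exact h

/-- forward: T1 step -/
lemma sub_T1 {l : ℕ} (h4 : l % 4 = 1) (h5 : 5 ≤ l) :
    SubdiagD {(1,false),(3,true),(l,false)} {(1,false),(3,true),(l-2,true)} := by
  refine ⟨l, ?_, ?_, ⟨false, ⟨(l+3)/4, ?_, ?_⟩, ⟨(l+3)/4, ?_, ?_⟩⟩, ?_⟩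
  · exact adm_cons adm_1f (adm_cons (adm_odd3 (by norm_num)) (adm_odd3 (by omega)))
  · simp [sizeD_cons, sizeD_1, sizeD_zero] <;> omega
  · simp [sizeD_cons, sizeD_1, sizeD_zero] <;> omega
  · simp [sizeD_cons, sizeD_1, sizeD_zero] <;> omega
  · simp [sizeD_cons, sizeD_1, sizeD_zero] <;> omega
  · simp [sizeD_cons, sizeD_1, sizeD_zero] <;> omega
  · left
    refine ⟨false, by omega, by simp, ?_⟩
    rw [if_neg (by omega), erase3_3 _ _ _ (by simp; omega) (by simp)]
    simp [Multiset.insert_eq_cons, Multiset.cons_add]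

/-- forward: T2 stay step -/
lemma sub_T2stay {l : ℕ} (h4 : l % 4 = 3) (h7 : 7 ≤ l) :
    SubdiagD {(1,false),(3,true),(l,true)} {(1,false),(3,true),(l-2,false)} := by
  refine ⟨l, ?_, ?_, ⟨true, ⟨(l+5)/4, ?_, ?_⟩, ⟨(l+1)/4, ?_, ?_⟩⟩, ?_⟩
  · exact adm_cons adm_1f (adm_cons (adm_odd3 (by norm_num)) (adm_odd1 (by omega)))
  · simp [sizeD_cons, sizeD_1, sizeD_zero] <;> omega
  · simp [sizeD_cons, sizeD_1, sizeD_zero] <;> omega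
  · simp [sizeD_cons, sizeD_1, sizeD_zero] <;> omega
  · simp [sizeD_cons, sizeD_1, sizeD_zero] <;> omega
  · simp [sizeD_cons, sizeD_1, sizeD_zero] <;> omega
  · left
    refine ⟨true, by omega, by simp, ?_⟩
    rw [if_neg (by omega), erase3_3 _ _ _ (by simp) (by simp; omega)]
    simp [Multiset.insert_eq_cons, Multiset.cons_add]

/-- forward: T2 branch step -/
lemma sub_T2branch {l : ℕ} (h4 : l % 4 = 3) (h3 : 3 ≤ l) :
    SubdiagD {(1,false),(3,true),(l,true)} {(1,false),(1,false),(l,true)} := by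
  refine ⟨3, ?_, ?_, ⟨true, ⟨(l+5)/4, ?_, ?_⟩, ⟨(l+1)/4, ?_, ?_⟩⟩, ?_⟩
  · exact adm_cons adm_1f (adm_cons adm_1f (adm_odd3 h4))
  · simp [sizeD_cons, sizeD_1, sizeD_zero] <;> omega
  · simp [sizeD_cons, sizeD_1, sizeD_zero] <;> omega
  · simp [sizeD_cons, sizeD_1, sizeD_zero] <;> omega
  · simp [sizeD_cons, sizeD_1, sizeD_zero] <;> omega
  · simp [sizeD_cons, sizeD_1, sizeD_zero] <;> omega
  · left
    refine ⟨true, by omega, by simp, ?_⟩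
    rw [if_neg (by omega), erase3_2 _ _ _ (by simp)]
    rw [add_comm, add1]
    simp [Multiset.insert_eq_cons]

/-- forward: T3 step -/
lemma sub_T3 {l : ℕ} (h4 : l % 4 = 3) :
    SubdiagD {(1,false),(1,false),(l,true)} {(l,true)} := by
  refine ⟨1, ?_, ?_, ⟨false, ⟨(l+1)/4, ?_, ?_⟩, ⟨(l+1)/4, ?_, ?_⟩⟩, ?_⟩
  · exact adm_odd3 h4
  · simp [sizeD_cons, sizeD_1, sizeD_zero] <;> omega
  · simp [sizeD_cons, sizeD_1, sizeD_zero] <;> omega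
  · simp [sizeD_cons, sizeD_1, sizeD_zero] <;> omega
  · simp [sizeD_cons, sizeD_1, sizeD_zero] <;> omega
  · simp [sizeD_cons, sizeD_1, sizeD_zero] <;> omega
  · right
    refine ⟨false, false, by simp, ?_, ?_⟩
    · rw [erase3_1]; simp
    · rw [erase3_1, erase2_1, if_pos rfl]; simp

/-- forward: single-line steps -/
lemma sub_single_t {l : ℕ} (h4 : l % 4 = 3) :
    SubdiagD {(l,true)} {(l-2,false)} := by
  refine ⟨l, ?_, ?_, ⟨true, ⟨(l+1)/4, ?_, ?_⟩, ⟨(l-3)/4, ?_, ?_⟩⟩, ?_⟩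
  · exact adm_odd1 (by omega)
  · simp [sizeD_cons, sizeD_1, sizeD_zero] <;> omega
  · simp [sizeD_cons, sizeD_1, sizeD_zero] <;> omega
  · simp [sizeD_cons, sizeD_1, sizeD_zero] <;> omega
  · simp [sizeD_cons, sizeD_1, sizeD_zero] <;> omega
  · simp [sizeD_cons, sizeD_1, sizeD_zero] <;> omega
  · left
    refine ⟨true, by omega, by simp, ?_⟩
    rw [if_neg (by omega), Multiset.erase_singleton]
    simp

lemma sub_single_f {l : ℕ} (h4 : l % 4 = 1) (h5 : 5 ≤ l) :
    SubdiagD {(l,false)} {(l-2,true)} := by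
  refine ⟨l, ?_, ?_, ⟨false, ⟨(l-1)/4, ?_, ?_⟩, ⟨(l-1)/4, ?_, ?_⟩⟩, ?_⟩
  · exact adm_odd3 (by omega)
  · simp [sizeD_cons, sizeD_1, sizeD_zero] <;> omega
  · simp [sizeD_cons, sizeD_1, sizeD_zero] <;> omega
  · simp [sizeD_cons, sizeD_1, sizeD_zero] <;> omega
  · simp [sizeD_cons, sizeD_1, sizeD_zero] <;> omega
  · simp [sizeD_cons, sizeD_1, sizeD_zero] <;> omega
  · left
    refine ⟨false, by omega, by simp, ?_⟩
    rw [if_neg (by omega), Multiset.erase_singleton]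
    simp

/-- forward: `{(1,0),(3,1),(3,1)} → {(1,0),(2,0),(2,1)}` -/
lemma sub_F : SubdiagD {(1,false),(3,true),(3,true)} {(1,false),(2,false),(2,true)} := by
  refine ⟨3, ?_, ?_, ⟨true, ⟨2, ?_, ?_⟩, ⟨1, ?_, ?_⟩⟩, ?_⟩
  · exact adm_cons adm_1f adm_2f2t
  · simp [sizeD_cons, sizeD_1, sizeD_zero] <;> norm_num
  · simp [sizeD_cons, sizeD_1, sizeD_zero] <;> norm_num
  · simp [sizeD_cons, sizeD_1, sizeD_zero] <;> norm_num
  · simp [sizeD_cons, sizeD_1, sizeD_zero] <;> norm_num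
  · simp [sizeD_cons, sizeD_1, sizeD_zero] <;> norm_num
  · right
    refine ⟨true, true, by simp, ?_, ?_⟩
    · rw [erase3_2 _ _ _ (by simp)]; simp
    · rw [erase3_2 _ _ _ (by simp), erase2_2 _ _ (by simp), if_neg (by omega)]
      decide

/-- forward: `{(1,0),(2,0),(2,1)} → {(1,0),(1,1),(1,1)}` -/
lemma sub_G : SubdiagD {(1,false),(2,false),(2,true)} {(1,false),(1,true),(1,true)} := by
  refine ⟨2, ?_, ?_, ⟨false, ⟨1, ?_, ?_⟩, ⟨1, ?_, ?_⟩⟩, ?_⟩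
  · exact adm_cons adm_1f adm_1t1t
  · simp [sizeD_cons, sizeD_1, sizeD_zero] <;> norm_num
  · simp [sizeD_cons, sizeD_1, sizeD_zero] <;> norm_num
  · simp [sizeD_cons, sizeD_1, sizeD_zero] <;> norm_num
  · simp [sizeD_cons, sizeD_1, sizeD_zero] <;> norm_num
  · simp [sizeD_cons, sizeD_1, sizeD_zero] <;> norm_num
  · right
    refine ⟨false, true, by simp, ?_, ?_⟩
    · rw [erase3_2 _ _ _ (by simp)]; simp
    · rw [erase3_2 _ _ _ (by simp), erase2_2 _ _ (by simp), if_neg (by omega)]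
      decide

/-- forward: `{(1,0),(1,1),(1,1)} → {(1,0)}` -/
lemma sub_H : SubdiagD {(1,false),(1,true),(1,true)} {(1,false)} := by
  refine ⟨1, ?_, ?_, ⟨true, ⟨1, ?_, ?_⟩, ⟨0, ?_, ?_⟩⟩, ?_⟩
  · exact adm_1f
  · simp [sizeD_cons, sizeD_1, sizeD_zero] <;> norm_num
  · simp [sizeD_cons, sizeD_1, sizeD_zero] <;> norm_num
  · simp [sizeD_cons, sizeD_1, sizeD_zero] <;> norm_num
  · simp [sizeD_cons, sizeD_1, sizeD_zero] <;> norm_num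
  · simp [sizeD_cons, sizeD_1, sizeD_zero] <;> norm_num
  · right
    refine ⟨true, true, by simp, ?_, ?_⟩
    · rw [erase3_2 _ _ _ (by simp)]; simp
    · rw [erase3_2 _ _ _ (by simp), erase2_2 _ _ (by simp), if_pos rfl]
      decide

end SliceAux
namespace SliceAux

/-- the main-chain diagram at step `i` -/
def mainD (n i : ℕ) : Multiset (ℕ×Bool) := {(1,false),(3,true),(4*n-3-2*i, decide (i % 2 = 1))}

/-- the single-line tail diagram at step `i` -/
def tailD (n i : ℕ) : Multiset (ℕ×Bool) := {(4*n+1-2*i, decide (i % 2 = 1))}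

/-- the branch diagram -/
def brD (n t : ℕ) : Multiset (ℕ×Bool) := {(1,false),(1,false),(4*n-4*t-5, true)}

lemma sub_main_step {n i : ℕ} (hn : 2 ≤ n) (hi : i ≤ 2*n-4) :
    SubdiagD (mainD n i) (mainD n (i+1)) := by
  rcases Nat.even_or_odd i with ⟨j, rfl⟩ | ⟨j, rfl⟩
  · have h0 : (j+j) % 2 = 0 := by omega
    have h1 : (j+j+1) % 2 = 1 := by omega
    have hL : 4*n-3-2*(j+j+1) = (4*n-3-2*(j+j)) - 2 := by omega
    simp only [mainD, h0, h1, hL]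
    norm_num
    exact sub_T1 (by omega) (by omega)
  · have h0 : (2*j+1) % 2 = 1 := by omega
    have h1 : (2*j+1+1) % 2 = 0 := by omega
    have hL : 4*n-3-2*(2*j+1+1) = (4*n-3-2*(2*j+1)) - 2 := by omega
    simp only [mainD, h0, h1, hL]
    norm_num
    exact sub_T2stay (by omega) (by omega)

lemma step_main_forced {n i : ℕ} {D' : Multiset (ℕ×Bool)} (hn : 2 ≤ n) (hi : i ≤ 2*n-4)
    (hev : i % 2 = 0) (h : SubdiagD (mainD n i) D') : D' = mainD n (i+1) := by
  have h1 : (i+1) % 2 = 1 := by omega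
  have hL : 4*n-3-2*(i+1) = (4*n-3-2*i) - 2 := by omega
  simp only [mainD, hev, h1, hL] at h ⊢
  norm_num at h ⊢
  exact step_T1 (by omega) h

lemma step_main_choice {n i : ℕ} {D' : Multiset (ℕ×Bool)} (hn : 2 ≤ n) (hi : i ≤ 2*n-5)
    (hod : i % 2 = 1) (h : SubdiagD (mainD n i) D') :
    D' = mainD n (i+1) ∨ D' = {(1,false),(1,false),(4*n-3-2*i,true)} := by
  have h1 : (i+1) % 2 = 0 := by omega
  have hL : 4*n-3-2*(i+1) = (4*n-3-2*i) - 2 := by omega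
  simp only [mainD, hod, h1, hL] at h ⊢
  norm_num at h ⊢
  exact step_T2 (by omega) h

lemma sub_tail_step {n i : ℕ} (hn : 2 ≤ n) (hi : i ≤ 2*n-1) (hi2 : 1 ≤ i) :
    SubdiagD (tailD n i) (tailD n (i+1)) := by
  rcases Nat.even_or_odd i with ⟨j, rfl⟩ | ⟨j, rfl⟩
  · have h0 : (j+j) % 2 = 0 := by omega
    have h1 : (j+j+1) % 2 = 1 := by omega
    have hL : 4*n+1-2*(j+j+1) = (4*n+1-2*(j+j)) - 2 := by omega
    simp only [tailD, h0, h1, hL]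
    norm_num
    exact sub_single_f (by omega) (by omega)
  · have h0 : (2*j+1) % 2 = 1 := by omega
    have h1 : (2*j+1+1) % 2 = 0 := by omega
    have hL : 4*n+1-2*(2*j+1+1) = (4*n+1-2*(2*j+1)) - 2 := by omega
    simp only [tailD, h0, h1, hL]
    norm_num
    exact sub_single_t (by omega)

lemma step_tail_forced {n i : ℕ} {D' : Multiset (ℕ×Bool)} (hn : 2 ≤ n) (hi : i ≤ 2*n-1)
    (h : SubdiagD (tailD n i) D') : D' = tailD n (i+1) := by
  have hb : (decide ((i+1) % 2 = 1)) = !(decide (i % 2 = 1)) := by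
    rcases Nat.even_or_odd i with ⟨j, rfl⟩ | ⟨j, rfl⟩
    · have h0 : (j+j) % 2 = 0 := by omega
      have h1 : (j+j+1) % 2 = 1 := by omega
      simp [h0, h1]
    · have h0 : (2*j+1) % 2 = 1 := by omega
      have h1 : (2*j+1+1) % 2 = 0 := by omega
      simp [h0, h1]
  have hL : 4*n+1-2*(i+1) = (4*n+1-2*i) - 2 := by omega
  rw [tailD, hL, hb]
  exact step_single (by omega) h

lemma mainD_2n3 {n : ℕ} (hn : 2 ≤ n) : mainD n (2*n-3) = {(1,false),(3,true),(3,true)} := by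
  have h0 : (2*n-3) % 2 = 1 := by omega
  have hL : 4*n-3-2*(2*n-3) = 3 := by omega
  simp [mainD, h0, hL]

lemma sub_branch {n t : ℕ} (hn : 2 ≤ n) (ht : t ≤ n-2) :
    SubdiagD (mainD n (2*t+1)) (brD n t) := by
  have h0 : (2*t+1) % 2 = 1 := by omega
  have hL : 4*n-3-2*(2*t+1) = 4*n-4*t-5 := by omega
  simp only [mainD, brD, h0, hL]
  norm_num
  exact sub_T2branch (by omega) (by omega)

lemma sub_branch2 {n t : ℕ} (hn : 2 ≤ n) (ht : t ≤ n-2) :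
    SubdiagD (brD n t) (tailD n (2*t+3)) := by
  have h0 : (2*t+3) % 2 = 1 := by omega
  have hL : 4*n+1-2*(2*t+3) = 4*n-4*t-5 := by omega
  simp only [brD, tailD, h0, hL]
  norm_num
  exact sub_T3 (by omega)

lemma step_br_forced {n t : ℕ} {D' : Multiset (ℕ×Bool)} (hn : 2 ≤ n) (ht : t ≤ n-2)
    (h : SubdiagD (brD n t) D') : D' = tailD n (2*t+3) := by
  have h0 : (2*t+3) % 2 = 1 := by omega
  have hL : 4*n+1-2*(2*t+3) = 4*n-4*t-5 := by omega
  simp only [brD, tailD, h0, hL] at h ⊢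
  norm_num at h ⊢
  exact step_T3 (by omega) h

end SliceAux
namespace SliceAux

/-- chain `t` (for `t ≤ n-2` branch chains, `t = n-1` the special ending) -/
def ch (n t i : ℕ) : Multiset (ℕ×Bool) :=
  if t + 2 ≤ n then
    if i ≤ 2*t+1 then mainD n i
    else if i = 2*t+2 then brD n t
    else tailD n i
  else
    if i ≤ 2*n-3 then mainD n i
    else if i = 2*n-2 then {(1,false),(2,false),(2,true)}
    else if i = 2*n-1 then {(1,false),(1,true),(1,true)}
    else {(1,false)}

lemma ch_A1 {n t i : ℕ} (htn : t+2 ≤ n) (h : i ≤ 2*t+1) : ch n t i = mainD n i := by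
  simp [ch, htn, h]

lemma ch_A2 {n t : ℕ} (htn : t+2 ≤ n) : ch n t (2*t+2) = brD n t := by
  have h1 : ¬(2*t+2 ≤ 2*t+1) := by omega
  simp [ch, htn, h1]

lemma ch_A3 {n t i : ℕ} (htn : t+2 ≤ n) (h : 2*t+3 ≤ i) : ch n t i = tailD n i := by
  have h1 : ¬(i ≤ 2*t+1) := by omega
  have h2 : ¬(i = 2*t+2) := by omega
  simp [ch, htn, h1, h2]

lemma ch_B1 {n t i : ℕ} (htn : ¬(t+2 ≤ n)) (h : i ≤ 2*n-3) : ch n t i = mainD n i := by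
  simp [ch, htn, h]

lemma ch_B2 {n t : ℕ} (hn : 2 ≤ n) (htn : ¬(t+2 ≤ n)) :
    ch n t (2*n-2) = {(1,false),(2,false),(2,true)} := by
  have h1 : ¬(2*n-2 ≤ 2*n-3) := by omega
  simp [ch, htn, h1]

lemma ch_B3 {n t : ℕ} (hn : 2 ≤ n) (htn : ¬(t+2 ≤ n)) :
    ch n t (2*n-1) = {(1,false),(1,true),(1,true)} := by
  have h1 : ¬(2*n-1 ≤ 2*n-3) := by omega
  have h2 : ¬(2*n-1 = 2*n-2) := by omega
  simp [ch, htn, h1, h2]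

lemma ch_B4 {n t : ℕ} (hn : 2 ≤ n) (htn : ¬(t+2 ≤ n)) :
    ch n t (2*n) = {(1,false)} := by
  have h1 : ¬(2*n ≤ 2*n-3) := by omega
  have h2 : ¬(2*n = 2*n-2) := by omega
  have h3 : ¬(2*n = 2*n-1) := by omega
  simp [ch, htn, h1, h2, h3]

lemma mainD_0 {n : ℕ} : mainD n 0 = {(1,false),(3,true),(4*n-3,false)} := by
  simp [mainD]

lemma ch_0 {n t : ℕ} (hn : 2 ≤ n) : ch n t 0 = {(1,false),(3,true),(4*n-3,false)} := by
  by_cases htn : t+2 ≤ n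
  · rw [ch_A1 htn (by omega), mainD_0]
  · rw [ch_B1 htn (by omega), mainD_0]

lemma ch_step {n t i : ℕ} (hn : 2 ≤ n) (ht : t < n) (hi : i < 2*n) :
    SubdiagD (ch n t i) (ch n t (i+1)) := by
  by_cases htn : t+2 ≤ n
  · by_cases h1 : i ≤ 2*t
    · rw [ch_A1 htn (by omega), ch_A1 htn (by omega)]
      exact sub_main_step hn (by omega)
    · by_cases h2 : i = 2*t+1
      · subst h2
        rw [ch_A1 htn (by omega), show 2*t+1+1 = 2*t+2 by ring, ch_A2 htn]
        exact sub_branch hn (by omega)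
      · by_cases h3 : i = 2*t+2
        · subst h3
          rw [ch_A2 htn, ch_A3 htn (by omega)]
          exact sub_branch2 hn (by omega)
        · rw [ch_A3 htn (by omega), ch_A3 htn (by omega)]
          exact sub_tail_step hn (by omega) (by omega)
  · by_cases h1 : i ≤ 2*n-4
    · rw [ch_B1 htn (by omega), ch_B1 htn (by omega)]
      exact sub_main_step hn (by omega)
    · by_cases h2 : i = 2*n-3
      · subst h2
        rw [ch_B1 htn (by omega), mainD_2n3 hn, show 2*n-3+1 = 2*n-2 by omega, ch_B2 hn htn]
        exact sub_F
      · by_cases h3 : i = 2*n-2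
        · subst h3
          rw [ch_B2 hn htn, show 2*n-2+1 = 2*n-1 by omega, ch_B3 hn htn]
          exact sub_G
        · have h4 : i = 2*n-1 := by omega
          subst h4
          rw [ch_B3 hn htn, show 2*n-1+1 = 2*n by omega, ch_B4 hn htn]
          exact sub_H

end SliceAux
namespace SliceAux

lemma complete {n : ℕ} (hn : 2 ≤ n) (u : ℕ → Multiset (ℕ×Bool))
    (h0 : u 0 = {(1,false),(3,true),(4*n-3,false)})
    (hstep : ∀ i, i < 2*n → SubdiagD (u i) (u (i+1))) :
    ∃ t, t < n ∧ ∀ i, i ≤ 2*n → u i = ch n t i := by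
  have hu0 : u 0 = mainD n 0 := by rw [h0, mainD_0]
  have tail_prop : ∀ j, 1 ≤ j → j ≤ 2*n → u j = tailD n j →
      ∀ i, j ≤ i → i ≤ 2*n → u i = tailD n i := by
    intro j hj1 hj2 hj i hji
    induction i, hji using Nat.le_induction with
    | base => intro _; exact hj
    | succ i hji ih =>
      intro hi
      have hui : u i = tailD n i := ih (by omega)
      have hm := hstep i (by omega)
      rw [hui] at hm
      exact step_tail_forced hn (by omega) hm
  have main_or : ∀ i, i ≤ 2*n-3 →
      (∀ j, j ≤ i → u j = mainD n j) ∨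
      (∃ t, t+2 ≤ n ∧ 2*t+2 ≤ i ∧ (∀ j, j ≤ 2*t+1 → u j = mainD n j) ∧
        u (2*t+2) = brD n t) := by
    intro i
    induction i with
    | zero =>
      intro _
      left
      intro j hj
      interval_cases j
      exact hu0
    | succ i ih =>
      intro hi
      rcases ih (by omega) with hA | ⟨t, h1, h2, h3, h4⟩
      · have hm := hstep i (by omega)
        rw [hA i le_rfl] at hm
        rcases Nat.even_or_odd i with he | ho
        · have hie : i % 2 = 0 := Nat.even_iff.mp he
          have hforced := step_main_forced hn (by omega) hie hm
          left
          intro j hj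
          by_cases hji : j ≤ i
          · exact hA j hji
          · have : j = i+1 := by omega
            rw [this, hforced]
        · have hio : i % 2 = 1 := Nat.odd_iff.mp ho
          rcases step_main_choice hn (by omega) hio hm with hmain | hbr
          · left
            intro j hj
            by_cases hji : j ≤ i
            · exact hA j hji
            · have : j = i+1 := by omega
              rw [this, hmain]
          · right
            obtain ⟨t, rfl⟩ : ∃ t, i = 2*t+1 := ⟨(i-1)/2, by omega⟩
            refine ⟨t, by omega, by omega, fun j hj => hA j (by omega), ?_⟩
            rw [show 2*t+1+1 = 2*t+2 by ring] at hbr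
            rw [hbr, brD, show 4*n-3-2*(2*t+1) = 4*n-4*t-5 by omega]
      · exact Or.inr ⟨t, h1, by omega, h3, h4⟩
  rcases main_or (2*n-3) le_rfl with hA | ⟨t, htn, hle, hmain, hbr⟩
  · have hm := hstep (2*n-3) (by omega)
    rw [hA (2*n-3) le_rfl, mainD_2n3 hn] at hm
    rw [show 2*n-3+1 = 2*n-2 by omega] at hm
    rcases step_T2' hm with hbr | hT6
    · -- branch at the last possible point: chain n-2
      refine ⟨n-2, by omega, ?_⟩
      have htn2 : (n-2)+2 ≤ n := by omega
      have hbr' : u (2*n-2) = brD n (n-2) := by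
        rw [hbr, brD, show 4*n-4*(n-2)-5 = 3 by omega]
      have hnext := hstep (2*n-2) (by omega)
      rw [hbr'] at hnext
      rw [show 2*n-2+1 = 2*(n-2)+3 by omega] at hnext
      have htail := step_br_forced hn (by omega) hnext
      rw [show 2*(n-2)+3 = 2*n-1 by omega] at htail
      have htails := tail_prop (2*n-1) (by omega) (by omega) htail
      intro i hi
      by_cases hi1 : i ≤ 2*(n-2)+1
      · rw [ch_A1 htn2 hi1]
        exact hA i (by omega)
      · by_cases hi2 : i = 2*n-2
        · rw [hi2, show 2*n-2 = 2*(n-2)+2 by omega, ch_A2 htn2]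
          rw [show 2*(n-2)+2 = 2*n-2 by omega, hbr']
        · rw [ch_A3 htn2 (by omega)]
          exact htails i (by omega) hi
    · -- special ending: chain n-1
      refine ⟨n-1, by omega, ?_⟩
      have htn2 : ¬((n-1)+2 ≤ n) := by omega
      have hm6 := hstep (2*n-2) (by omega)
      rw [hT6, show 2*n-2+1 = 2*n-1 by omega] at hm6
      have h6 := step_T6 hm6
      have hm7 := hstep (2*n-1) (by omega)
      rw [h6, show 2*n-1+1 = 2*n by omega] at hm7
      have h7 := step_T7 hm7
      intro i hi
      by_cases hi1 : i ≤ 2*n-3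
      · rw [ch_B1 htn2 hi1]
        exact hA i hi1
      · by_cases hi2 : i = 2*n-2
        · rw [hi2, ch_B2 hn htn2]
          exact hT6
        · by_cases hi3 : i = 2*n-1
          · rw [hi3, ch_B3 hn htn2]
            exact h6
          · rw [show i = 2*n by omega, ch_B4 hn htn2]
            exact h7
  · -- early branch: chain t
    refine ⟨t, by omega, ?_⟩
    have hnext := hstep (2*t+2) (by omega)
    rw [hbr] at hnext
    have htail := step_br_forced hn (by omega) hnext
    have htails := tail_prop (2*t+3) (by omega) (by omega) htail
    intro i hi
    by_cases hi1 : i ≤ 2*t+1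
    · rw [ch_A1 htn hi1]
      exact hmain i hi1
    · by_cases hi2 : i = 2*t+2
      · rw [hi2, ch_A2 htn]
        exact hbr
      · rw [ch_A3 htn (by omega)]
        exact htails i (by omega) hi

end SliceAux
namespace SliceAux

lemma ch_ne {n t1 t2 : ℕ} (hn : 2 ≤ n) (h12 : t1 < t2) (h2 : t2 < n) :
    ch n t1 (2*t1+2) ≠ ch n t2 (2*t1+2) := by
  have htn1 : t1+2 ≤ n := by omega
  rw [ch_A2 htn1]
  have hcnt : Multiset.count ((1:ℕ),false) (brD n t1) = 2 := by
    simp [brD, Multiset.count_cons, Multiset.count_singleton]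
  by_cases htn2 : t2+2 ≤ n
  · rw [ch_A1 htn2 (by omega)]
    intro heq
    have hc := congrArg (Multiset.count ((1:ℕ),false)) heq
    have hb : (2*t1+2) % 2 = 0 := by omega
    have hL : ¬((1:ℕ) = 4*n-3-2*(2*t1+2)) := by omega
    rw [hcnt] at hc
    simp [mainD, hb, Multiset.count_cons, Multiset.count_singleton, Prod.ext_iff, hL] at hc
  · by_cases hc3 : 2*t1+2 ≤ 2*n-3
    · rw [ch_B1 htn2 hc3]
      intro heq
      have hc := congrArg (Multiset.count ((1:ℕ),false)) heq
      have hb : (2*t1+2) % 2 = 0 := by omega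
      have hL : ¬((1:ℕ) = 4*n-3-2*(2*t1+2)) := by omega
      rw [hcnt] at hc
      simp [mainD, hb, Multiset.count_cons, Multiset.count_singleton, Prod.ext_iff, hL] at hc
    · have ht1 : t1 = n-2 := by omega
      rw [show 2*t1+2 = 2*n-2 by omega, ch_B2 hn htn2]
      have hbr : brD n t1 = {(1,false),(1,false),(3,true)} := by
        rw [brD, show 4*n-4*t1-5 = 3 by omega]
      rw [hbr]
      intro heq
      have hc := congrArg (Multiset.count ((1:ℕ),false)) heq
      simp [Multiset.count_cons, Multiset.count_singleton] at hc

end SliceAux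

theorem slicings_aux_main (n : ℕ) (hn : 2 ≤ n) :
    (SlicingsD n ({(1, false), (3, true), (4 * n - 3, false)} : Multiset (ℕ × Bool))).ncard
      = n := by
  classical
  set F : Fin n → (Fin (2*n+1) → Multiset (ℕ×Bool)) :=
    fun t i => SliceAux.ch n t i with hF
  have hinj : Function.Injective F := by
    intro a b hab
    by_contra hne
    rcases lt_trichotomy a.val b.val with h | h | h
    · exact SliceAux.ch_ne hn h b.isLt (congrFun hab ⟨2*a.val+2, by omega⟩)
    · exact hne (Fin.ext h)
    · exact SliceAux.ch_ne hn h a.isLt (congrFun hab ⟨2*b.val+2, by omega⟩).symm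
  have hset : SlicingsD n ({(1, false), (3, true), (4 * n - 3, false)} : Multiset (ℕ × Bool))
      = ↑(Finset.image F Finset.univ) := by
    ext s
    simp only [Finset.coe_image, Finset.coe_univ, Set.image_univ, Set.mem_range]
    constructor
    · rintro ⟨h0, hstep⟩
      set u : ℕ → Multiset (ℕ×Bool) := fun i => s ⟨min i (2*n), by omega⟩ with hu
      have hueq : ∀ i, ∀ h : i ≤ 2*n, u i = s ⟨i, by omega⟩ := by
        intro i h
        simp only [hu]
        congr 1
        exact Fin.ext (by simpa using Nat.min_eq_left h)
      have h0' : u 0 = {(1,false),(3,true),(4*n-3,false)} := by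
        rw [hueq 0 (by omega)]
        rw [show (⟨0, by omega⟩ : Fin (2*n+1)) = 0 from Fin.ext (by simp)]
        exact h0
      have hstep' : ∀ i, i < 2*n → SubdiagD (u i) (u (i+1)) := by
        intro i hi
        rw [hueq i (by omega), hueq (i+1) (by omega)]
        exact hstep ⟨i, hi⟩
      obtain ⟨t, ht, hch⟩ := SliceAux.complete hn u h0' hstep'
      refine ⟨⟨t, ht⟩, ?_⟩
      funext i
      have h1 := hch i.val (by omega)
      rw [hueq i.val (by omega)] at h1
      simp only [hF]
      rw [← h1]
    · rintro ⟨t, rfl⟩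
      constructor
      · show SliceAux.ch n t ((0 : Fin (2*n+1)).val) = _
        rw [show ((0 : Fin (2*n+1)).val) = 0 from rfl]
        exact SliceAux.ch_0 hn
      · intro i
        show SubdiagD (SliceAux.ch n t (i.castSucc.val)) (SliceAux.ch n t (i.succ.val))
        simp only [Fin.coe_castSucc, Fin.val_succ]
        exact SliceAux.ch_step hn t.isLt i.isLt
  rw [hset, Set.ncard_coe_finset, Finset.card_image_of_injective _ hinj,
    Finset.card_univ, Fintype.card_fin]

/-- For `n ≥ 2`, the diagram of the codimension-2 orbit `O₂` of `osp(2n+1, 2n)`, with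
lines `(1,0)`, `(3,1)` and `(4n−3, 0)`, has exactly `n` admissible slicings. -/
theorem n_slicings_of_orbit_O2 (n : ℕ) (hn : 2 ≤ n) :
    (SlicingsD n ({(1, false), (3, true), (4 * n - 3, false)} : Multiset (ℕ × Bool))).ncard
      = n := by
  exact slicings_aux_main n hn
end
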